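/- Let $\Omega\subset\mathbb{R}^N$ be a bounded convex open nonempty set and $\beta>0$. Then $\frac{1}{|\Omega|}\int_\Omega d_\Omega^{\beta}\,dx \ge \binom{N+\beta}{N}^{-1} r_\Omega^{\beta}$, with equality when $\Omega$ is the unit ball $B_1$. -/

import Mathlib

set_option linter.unusedSectionVars false
open Real MeasureTheory Metric intervalIntegral

lemma beta_real {a b : ℝ} (ha : 0 < a) (hb : 0 < b) :
    ∫ x in (0:ℝ)..(1:ℝ), x ^ (a-1) * (1-x) ^ (b-1) = Gamma a * Gamma b / Gamma (a+b) := by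
  have key : Complex.betaIntegral a b
      = ((∫ x in (0:ℝ)..(1:ℝ), x ^ (a-1) * (1-x) ^ (b-1) : ℝ) : ℂ) := by
    rw [Complex.betaIntegral, ← intervalIntegral.integral_ofReal]
    apply intervalIntegral.integral_congr
    intro x hx
    rw [Set.uIcc_of_le (by norm_num : (0:ℝ) ≤ 1)] at hx
    obtain ⟨hx0, hx1⟩ := hx
    show (x:ℂ) ^ ((a:ℂ) - 1) * (1 - (x:ℂ)) ^ ((b:ℂ) - 1) = ((x ^ (a - 1) * (1 - x) ^ (b - 1) : ℝ) : ℂ)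
    rw [Complex.ofReal_mul, Complex.ofReal_cpow hx0, Complex.ofReal_cpow (by linarith)]
    push_cast
    norm_num
  have h := Complex.Gamma_mul_Gamma_eq_betaIntegral (s := (a:ℂ)) (t := (b:ℂ))
    (by simpa using ha) (by simpa using hb)
  rw [key] at h
  have h2 : ((Gamma a * Gamma b : ℝ) : ℂ)
      = ((Gamma (a+b) * ∫ x in (0:ℝ)..(1:ℝ), x ^ (a-1) * (1-x) ^ (b-1) : ℝ) : ℂ) := by
    push_cast
    rw [← Complex.Gamma_ofReal, ← Complex.Gamma_ofReal, ← Complex.Gamma_ofReal] at *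
    convert h using 2
    push_cast; ring
  have h3 := Complex.ofReal_inj.mp h2
  have hG : Gamma (a+b) ≠ 0 := (Real.Gamma_pos_of_pos (by linarith)).ne'
  field_simp
  linarith [h3]

lemma beta_nat1 (n : ℕ) {b : ℝ} (hb : 0 < b) :
    ∫ x in (0:ℝ)..(1:ℝ), x ^ (b-1) * (1-x) ^ n
      = Gamma b * Gamma (n+1) / Gamma (b+n+1) := by
  have h := beta_real hb (by positivity : (0:ℝ) < n + 1)
  simp only [add_sub_cancel_right] at h
  rw [show ∫ x in (0:ℝ)..(1:ℝ), x ^ (b-1) * (1-x) ^ n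
      = ∫ x in (0:ℝ)..(1:ℝ), x ^ (b-1) * (1-x) ^ ((n:ℝ)) from by
    simp [Real.rpow_natCast]]
  rw [h]; ring_nf

lemma beta_nat2 {N : ℕ} (hN : 1 ≤ N) {b : ℝ} (hb : 0 < b) :
    ∫ x in (0:ℝ)..(1:ℝ), x ^ (N-1) * (1-x) ^ (b-1)
      = Gamma N * Gamma b / Gamma (N+b) := by
  have h := beta_real (by exact_mod_cast Nat.pos_of_ne_zero (by omega) : (0:ℝ) < N) hb
  rw [show ∫ x in (0:ℝ)..(1:ℝ), x ^ (N-1) * (1-x) ^ (b-1)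
      = ∫ x in (0:ℝ)..(1:ℝ), x ^ ((N:ℝ)-1) * (1-x) ^ (b-1) from by
    congr 1; ext x
    rw [show ((N:ℝ)-1) = ((N-1 : ℕ) : ℝ) by push_cast [Nat.cast_sub hN]; ring,
      Real.rpow_natCast]]
  rw [h]

lemma int_scaled {r : ℝ} (hr : 0 < r) (N : ℕ) {β : ℝ} (hβ : 0 < β) :
    ∫ t in (0:ℝ)..r, t ^ (β-1) * (1 - t/r) ^ N
      = r ^ β * (Gamma β * Gamma (N+1) / Gamma (β+N+1)) := by
  have hc := integral_comp_mul_left (a := (0:ℝ)) (b := 1)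
    (fun t => t ^ (β-1) * (1 - t/r) ^ N) hr.ne'
  simp only [mul_zero, mul_one] at hc
  have h1 : ∫ x in (0:ℝ)..(1:ℝ), (r*x) ^ (β-1) * (1 - (r*x)/r) ^ N
      = r ^ (β-1) * (Gamma β * Gamma (N+1) / Gamma (β+N+1)) := by
    rw [← beta_nat1 N hβ, ← intervalIntegral.integral_const_mul]
    apply intervalIntegral.integral_congr
    intro x hx
    rw [Set.uIcc_of_le (by norm_num : (0:ℝ) ≤ 1)] at hx
    show (r*x) ^ (β - 1) * (1 - r * x / r) ^ N = r ^ (β - 1) * (x ^ (β - 1) * (1 - x) ^ N)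
    rw [mul_div_cancel_left₀ _ hr.ne', Real.mul_rpow hr.le hx.1]
    ring
  rw [h1] at hc
  have hI : ∫ t in (0:ℝ)..r, t ^ (β-1) * (1 - t/r) ^ N
      = r * (r ^ (β-1) * (Gamma β * Gamma (N+1) / Gamma (β+N+1))) := by
    rw [hc, smul_eq_mul]; field_simp
  rw [hI, ← mul_assoc, Real.rpow_sub hr, Real.rpow_one]
  field_simp

variable {E : Type*} [NormedAddCommGroup E] [NormedSpace ℝ E]

lemma ball_combo {Ω : Set E} (hconv : Convex ℝ Ω) {u v : E} {su sv a b : ℝ}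
    (hsu : 0 < su) (hsv : 0 < sv) (hu : ball u su ⊆ Ω) (hv : ball v sv ⊆ Ω)
    (ha : 0 ≤ a) (hb : 0 ≤ b) (hab : a + b = 1) :
    ball (a • u + b • v) (a * su + b * sv) ⊆ Ω := by
  intro p hp
  rw [mem_ball, dist_eq_norm] at hp
  set ρ := a * su + b * sv with hρdef
  have hρ : 0 < ρ := by
    have h1 : min su sv ≤ su := min_le_left _ _
    have h2 : min su sv ≤ sv := min_le_right _ _
    have h3 : 0 < min su sv := lt_min hsu hsv
    nlinarith
  set e := p - (a • u + b • v) with he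
  have he' : ‖e‖ < ρ := hp
  have hsum : a • ((su/ρ) • e) + b • ((sv/ρ) • e) = e := by
    rw [smul_smul, smul_smul, ← add_smul]
    rw [show a * (su/ρ) + b * (sv/ρ) = 1 by field_simp; exact hρdef.symm, one_smul]
  have hp1 : p = a • (u + (su/ρ) • e) + b • (v + (sv/ρ) • e) := by
    rw [smul_add, smul_add]
    rw [show a • u + a • ((su/ρ) • e) + (b • v + b • ((sv/ρ) • e))
        = (a • u + b • v) + (a • ((su/ρ) • e) + b • ((sv/ρ) • e)) by abel, hsum]
    simp [he]
  have hmem : ∀ s : ℝ, 0 < s → u + (s/ρ) • e ∈ ball u s := by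
    intro s hs
    rw [mem_ball, dist_eq_norm, add_sub_cancel_left, norm_smul]
    rw [Real.norm_eq_abs, abs_of_nonneg (by positivity)]
    calc s/ρ * ‖e‖ < s/ρ * ρ := by
          apply mul_lt_mul_of_pos_left he' (by positivity)
      _ = s := by field_simp
  rw [hp1]
  exact hconv (hu (hmem su hsu)) (hv ((ball_subset_ball le_rfl) (by
    simpa using hmem sv hsv))) ha hb hab

variable [FiniteDimensional ℝ E]

lemma ball_distBdry_subset {Ω : Set E} (hΩ : Ω ≠ Set.univ) {x : E} (hx : x ∈ Ω) :
    ball x (infDist x (frontier Ω)) ⊆ Ω := by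
  obtain ⟨y, hyf, hyd⟩ := exists_mem_frontier_infDist_compl_eq_dist hx hΩ
  have h1 : infDist x (frontier Ω) ≤ infDist x Ωᶜ := by
    rw [hyd]; exact infDist_le_dist_of_mem hyf
  exact (ball_subset_ball h1).trans ball_infDist_compl_subset

lemma le_distBdry' {Ω : Set E} (hopen : IsOpen Ω) (hf : (frontier Ω).Nonempty) {z : E} {ρ : ℝ}
    (hsub : ball z ρ ⊆ Ω) : ρ ≤ infDist z (frontier Ω) := by
  rw [infDist_eq_iInf]
  have : Nonempty (frontier Ω) := hf.to_subtype
  refine le_ciInf fun y => ?_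
  by_contra h
  push_neg at h
  have hyΩ : (y:E) ∈ Ω := hsub (by rw [mem_ball, dist_comm]; exact h)
  exact (Set.disjoint_left.mp (disjoint_frontier_iff_isOpen.mpr hopen) y.2) hyΩ

lemma distBdry_pos' {Ω : Set E} (hopen : IsOpen Ω) (hf : (frontier Ω).Nonempty) {x : E}
    (hx : x ∈ Ω) : 0 < infDist x (frontier Ω) :=
  (isClosed_frontier.notMem_iff_infDist_pos hf).mp
    (fun h => (Set.disjoint_left.mp (disjoint_frontier_iff_isOpen.mpr hopen) h) hx)

lemma distBdry_concave' {Ω : Set E} (hconv : Convex ℝ Ω) (hopen : IsOpen Ω)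
    (hΩ : Ω ≠ Set.univ) (hf : (frontier Ω).Nonempty) {x y : E} {a b : ℝ}
    (hx : x ∈ Ω) (hy : y ∈ Ω) (ha : 0 ≤ a) (hb : 0 ≤ b) (hab : a + b = 1) :
    a * infDist x (frontier Ω) + b * infDist y (frontier Ω)
      ≤ infDist (a • x + b • y) (frontier Ω) :=
  le_distBdry' hopen hf (ball_combo hconv (distBdry_pos' hopen hf hx)
    (distBdry_pos' hopen hf hy) (ball_distBdry_subset hΩ hx) (ball_distBdry_subset hΩ hy)
    ha hb hab)

/-- Distance from `x` to the boundary of `Ω`. -/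
noncomputable def distBdry {N : ℕ} (Ω : Set (EuclideanSpace ℝ (Fin N)))
    (x : EuclideanSpace ℝ (Fin N)) : ℝ :=
  Metric.infDist x (frontier Ω)

/-- Inradius of `Ω`: the supremum over `Ω` of the distance to the boundary. -/
noncomputable def inradius {N : ℕ} (Ω : Set (EuclideanSpace ℝ (Fin N))) : ℝ :=
  ⨆ x ∈ Ω, distBdry Ω x

/-- Perimeter of a convex body: the `(N-1)`-dimensional Hausdorff measure of its boundary. -/
noncomputable def perim {N : ℕ} (Ω : Set (EuclideanSpace ℝ (Fin N))) : ℝ :=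
  (μH[(N : ℝ) - 1] (frontier Ω)).toReal

lemma inradius_eq_of_max {N : ℕ} {Ω : Set (EuclideanSpace ℝ (Fin N))} {z : EuclideanSpace ℝ (Fin N)}
    (hz : z ∈ Ω) (hmax : ∀ x ∈ Ω, distBdry Ω x ≤ distBdry Ω z) :
    inradius Ω = distBdry Ω z := by
  have hnn : 0 ≤ distBdry Ω z := Metric.infDist_nonneg
  have hg : ∀ x, (⨆ _ : x ∈ Ω, distBdry Ω x) ≤ distBdry Ω z := by
    intro x
    by_cases hx : x ∈ Ω
    · haveI : Nonempty (x ∈ Ω) := ⟨hx⟩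
      rw [ciSup_const]
      exact hmax x hx
    · haveI : IsEmpty (x ∈ Ω) := ⟨hx⟩
      rw [Real.iSup_of_isEmpty]
      exact hnn
  refine le_antisymm (Real.iSup_le hg hnn) ?_
  have hb : BddAbove (Set.range fun x => ⨆ _ : x ∈ Ω, distBdry Ω x) :=
    ⟨distBdry Ω z, by rintro y ⟨x, rfl⟩; exact hg x⟩
  haveI : Nonempty (z ∈ Ω) := ⟨hz⟩
  have h2 : (⨆ _ : z ∈ Ω, distBdry Ω z) ≤ inradius Ω := le_ciSup hb z
  rwa [ciSup_const] at h2

lemma exists_inradius_max {N : ℕ} {Ω : Set (EuclideanSpace ℝ (Fin N))}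
    (hopen : IsOpen Ω) (hbdd : Bornology.IsBounded Ω) (hne : Ω.Nonempty)
    (hfr : (frontier Ω).Nonempty) :
    ∃ z ∈ Ω, inradius Ω = distBdry Ω z ∧ 0 < distBdry Ω z ∧
      ∀ x ∈ Ω, distBdry Ω x ≤ distBdry Ω z := by
  have hd : Continuous (distBdry Ω) := continuous_infDist_pt _
  obtain ⟨z, hzK, hz⟩ := hbdd.isCompact_closure.exists_isMaxOn
    (hne.mono subset_closure) hd.continuousOn
  have hmax : ∀ x ∈ Ω, distBdry Ω x ≤ distBdry Ω z := fun x hx => hz (subset_closure hx)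
  obtain ⟨w, hw⟩ := hne
  have hwpos : 0 < distBdry Ω w :=
    (isClosed_frontier.notMem_iff_infDist_pos hfr).mp
      (fun h => (Set.disjoint_left.mp (disjoint_frontier_iff_isOpen.mpr hopen) h) hw)
  have hzΩ : z ∈ Ω := by
    rcases (closure_eq_self_union_frontier Ω ▸ hzK) with h | h
    · exact h
    · exfalso
      have h0 : distBdry Ω z = 0 := Metric.infDist_zero_of_mem h
      have h1 : distBdry Ω w ≤ distBdry Ω z := hz (subset_closure hw)
      rw [h0] at h1
      exact absurd h1 (not_le.mpr hwpos)
  exact ⟨z, hzΩ, inradius_eq_of_max hzΩ hmax, lt_of_lt_of_le hwpos (hmax w hw), hmax⟩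

lemma ne_univ_of_bounded {N : ℕ} (hN : 0 < N) {Ω : Set (EuclideanSpace ℝ (Fin N))}
    (hbdd : Bornology.IsBounded Ω) : Ω ≠ Set.univ := by
  haveI : Nonempty (Fin N) := ⟨⟨0, hN⟩⟩
  intro h
  obtain ⟨C, hC⟩ := hbdd.exists_norm_le
  obtain ⟨x, hx⟩ := exists_norm_eq (EuclideanSpace ℝ (Fin N))
    (le_max_right C 0 |>.trans (le_add_of_nonneg_right zero_le_one) : (0:ℝ) ≤ max C 0 + 1)
  have := hC x (h ▸ Set.mem_univ x)
  rw [hx] at this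
  have : C ≤ max C 0 := le_max_left _ _
  linarith

lemma main_ineq {N : ℕ} (hN : 0 < N) {Ω : Set (EuclideanSpace ℝ (Fin N))}
    (hconv : Convex ℝ Ω) (hopen : IsOpen Ω) (hbdd : Bornology.IsBounded Ω)
    (hne : Ω.Nonempty) {β : ℝ} (hβ : 0 < β) :
    Gamma (β+1) * Gamma (N+1) / Gamma (β+N+1) * (inradius Ω ^ β * (volume Ω).toReal)
      ≤ ∫ x in Ω, distBdry Ω x ^ β := by
  haveI : Nonempty (Fin N) := ⟨⟨0, hN⟩⟩
  have hΩuniv : Ω ≠ Set.univ := ne_univ_of_bounded hN hbdd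
  have hfr : (frontier Ω).Nonempty := nonempty_frontier_iff.mpr ⟨hne, hΩuniv⟩
  obtain ⟨z, hzΩ, hrz, hrpos, hmax⟩ := exists_inradius_max hopen hbdd hne hfr
  set r := distBdry Ω z with hrdef
  have hd : Continuous (distBdry Ω) := continuous_infDist_pt _
  -- integrability
  have hcont : Continuous (fun x => distBdry Ω x ^ β) := by
    rw [continuous_iff_continuousAt]
    exact fun x => (Real.continuousAt_rpow_const _ _ (Or.inr hβ.le)).comp hd.continuousAt
  have hint : IntegrableOn (fun x => distBdry Ω x ^ β) Ω volume :=
    (hcont.continuousOn.integrableOn_compact hbdd.isCompact_closure).mono_set subset_closure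
  have hvolT : volume Ω ≠ ⊤ := hbdd.measure_lt_top.ne
  -- key measure bound
  have hkey : ∀ t ∈ Set.Ioo (0:ℝ) r,
      volume Ω * ENNReal.ofReal ((1 - t/r)^N * t^(β-1))
        ≤ (volume.restrict Ω) {a | t < distBdry Ω a} * ENNReal.ofReal (t^(β-1)) := by
    intro t ht
    obtain ⟨ht0, htr⟩ := ht
    set c := 1 - t/r with hcdef
    have hl : 0 < t/r := div_pos ht0 hrpos
    have hl1 : t/r < 1 := (div_lt_one hrpos).mpr htr
    have hc : 0 < c := by simp [hcdef]; linarith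
    have hsub : (AffineMap.homothety z c) '' Ω ⊆ {a | t < distBdry Ω a} ∩ Ω := by
      rintro p ⟨y, hy, rfl⟩
      have hyp : (AffineMap.homothety z c) y = c • y + (t/r) • z := by
        simp [AffineMap.homothety_apply, vsub_eq_sub, vadd_eq_add, smul_sub, hcdef]
        module
      have hsum : c + t/r = 1 := by simp [hcdef]
      have hmem : c • y + (t/r) • z ∈ Ω := hconv hy hzΩ hc.le hl.le hsum
      have hconc := distBdry_concave' hconv hopen hΩuniv hfr hy hzΩ hc.le hl.le hsum
      have hdy : 0 < infDist y (frontier Ω) := distBdry_pos' hopen hfr hy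
      have hzr : infDist z (frontier Ω) = r := rfl
      rw [hzr] at hconc
      have htt : t/r * r = t := div_mul_cancel₀ t hrpos.ne'
      rw [htt] at hconc
      constructor
      · show t < distBdry Ω _
        rw [hyp, distBdry]
        have hcd : 0 < c * infDist y (frontier Ω) := mul_pos hc hdy
        exact lt_of_lt_of_le (lt_add_of_pos_left t hcd) hconc
      · rw [hyp]; exact hmem
    have hmeas : MeasurableSet {a | t < distBdry Ω a} :=
      measurableSet_lt measurable_const hd.measurable
    have h1 : (volume.restrict Ω) {a | t < distBdry Ω a}
        = volume ({a | t < distBdry Ω a} ∩ Ω) := Measure.restrict_apply hmeas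
    have h2 : volume ((AffineMap.homothety z c) '' Ω)
        = ENNReal.ofReal (c^N) * volume Ω := by
      rw [Measure.addHaar_image_homothety]
      congr 2
      rw [finrank_euclideanSpace_fin, abs_of_nonneg (by positivity)]
    calc volume Ω * ENNReal.ofReal ((1 - t/r)^N * t^(β-1))
        = (ENNReal.ofReal (c^N) * volume Ω) * ENNReal.ofReal (t^(β-1)) := by
          rw [ENNReal.ofReal_mul (by positivity)]; ring
      _ ≤ (volume.restrict Ω) {a | t < distBdry Ω a} * ENNReal.ofReal (t^(β-1)) := by
          apply mul_le_mul_left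
          rw [h1, ← h2]
          exact measure_mono hsub
  -- layer cake
  have h0 : 0 ≤ᵐ[volume.restrict Ω] distBdry Ω :=
    Filter.Eventually.of_forall (fun _ => Metric.infDist_nonneg)
  have hlc := MeasureTheory.lintegral_rpow_eq_lintegral_meas_lt_mul (volume.restrict Ω) h0
    hd.aemeasurable hβ
  have hORint : ENNReal.ofReal (∫ x in Ω, distBdry Ω x ^ β)
      = ∫⁻ x in Ω, ENNReal.ofReal (distBdry Ω x ^ β) := by
    apply MeasureTheory.ofReal_integral_eq_lintegral_ofReal hint
    exact Filter.Eventually.of_forall (fun x => Real.rpow_nonneg Metric.infDist_nonneg β)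
  -- the one-dim integral
  have hOneInt : IntegrableOn (fun t => t^(β-1) * (1 - t/r)^N) (Set.Ioo 0 r) volume := by
    rw [← intervalIntegrable_iff_integrableOn_Ioo_of_le hrpos.le]
    exact (intervalIntegral.intervalIntegrable_rpow' (by linarith)).mul_continuousOn
      (by fun_prop)
  have hOneVal : ∫ t in Set.Ioo 0 r, t^(β-1) * (1 - t/r)^N
      = r ^ β * (Gamma β * Gamma (N+1) / Gamma (β+N+1)) := by
    rw [← MeasureTheory.integral_Ioc_eq_integral_Ioo,
      ← intervalIntegral.integral_of_le hrpos.le]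
    exact int_scaled hrpos N hβ
  have hswap : (fun t : ℝ => (1 - t/r)^N * t^(β-1)) = fun t => t^(β-1) * (1 - t/r)^N := by
    ext t; ring
  have hOneInt' : IntegrableOn (fun t : ℝ => (1 - t/r)^N * t^(β-1)) (Set.Ioo 0 r) volume := by
    rw [hswap]; exact hOneInt
  have hOneOR : ∫⁻ t in Set.Ioo 0 r, ENNReal.ofReal ((1 - t/r)^N * t^(β-1))
      = ENNReal.ofReal (r ^ β * (Gamma β * Gamma (N+1) / Gamma (β+N+1))) := by
    rw [← MeasureTheory.ofReal_integral_eq_lintegral_ofReal hOneInt']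
    · rw [show ∫ t in Set.Ioo 0 r, (1 - t/r)^N * t^(β-1)
          = ∫ t in Set.Ioo 0 r, t^(β-1) * (1 - t/r)^N from by rw [hswap], hOneVal]
    · filter_upwards [ae_restrict_mem measurableSet_Ioo] with t ht
      exact mul_nonneg (pow_nonneg (sub_nonneg.mpr ((div_le_one hrpos).mpr ht.2.le)) N)
        (Real.rpow_nonneg ht.1.le _)
  -- chain
  have hchain : ENNReal.ofReal β * (volume Ω *
      ENNReal.ofReal (r ^ β * (Gamma β * Gamma (N+1) / Gamma (β+N+1))))
      ≤ ENNReal.ofReal (∫ x in Ω, distBdry Ω x ^ β) := by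
    rw [hORint, hlc]
    apply mul_le_mul_right
    rw [← hOneOR, ← MeasureTheory.lintegral_const_mul' _ _ hvolT]
    refine le_trans ?_ (MeasureTheory.lintegral_mono_set (Set.Ioo_subset_Ioi_self (b := (0:ℝ)) (a := r)))
    apply MeasureTheory.lintegral_mono_ae
    filter_upwards [ae_restrict_mem measurableSet_Ioo] with t ht
    exact hkey t ht
  -- convert to reals
  have hVnn : (0:ℝ) ≤ (volume Ω).toReal := ENNReal.toReal_nonneg
  have hG1 : 0 < Gamma (β + N + 1) := Real.Gamma_pos_of_pos (by positivity)
  have hGβ : 0 < Gamma β := Real.Gamma_pos_of_pos hβ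
  have hGN : 0 < Gamma ((N:ℝ)+1) := Real.Gamma_pos_of_pos (by positivity)
  have hXnn : 0 ≤ r ^ β * (Gamma β * Gamma ((N:ℝ)+1) / Gamma (β+N+1)) :=
    mul_nonneg (Real.rpow_nonneg hrpos.le _)
      (le_of_lt (div_pos (mul_pos hGβ hGN) hG1))
  have hEq : ENNReal.ofReal (β * (r ^ β * (Gamma β * Gamma ((N:ℝ)+1) / Gamma (β+N+1)))
        * (volume Ω).toReal)
      = ENNReal.ofReal β * (volume Ω *
        ENNReal.ofReal (r ^ β * (Gamma β * Gamma ((N:ℝ)+1) / Gamma (β+N+1)))) := by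
    rw [ENNReal.ofReal_mul (mul_nonneg hβ.le hXnn), ENNReal.ofReal_mul hβ.le,
      ENNReal.ofReal_toReal hvolT]
    ring
  have hfinal : β * (r ^ β * (Gamma β * Gamma ((N:ℝ)+1) / Gamma (β+N+1))) * (volume Ω).toReal
      ≤ ∫ x in Ω, distBdry Ω x ^ β :=
    (ENNReal.ofReal_le_ofReal_iff (MeasureTheory.integral_nonneg
      (fun x => Real.rpow_nonneg Metric.infDist_nonneg β))).mp
      (le_trans (le_of_eq hEq) hchain)
  calc Gamma (β+1) * Gamma (N+1) / Gamma (β+N+1) * (inradius Ω ^ β * (volume Ω).toReal)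
      = β * (r ^ β * (Gamma β * Gamma (N+1) / Gamma (β+N+1))) * (volume Ω).toReal := by
        rw [hrz, Real.Gamma_add_one hβ.ne']
        ring
    _ ≤ _ := hfinal

section BallCase
variable {N : ℕ}

lemma infDist_sphere_one {N : ℕ} (hN : 0 < N) (x : EuclideanSpace ℝ (Fin N))
    (hx : ‖x‖ ≤ 1) : infDist x (sphere (0 : EuclideanSpace ℝ (Fin N)) 1) = 1 - ‖x‖ := by
  haveI : Nonempty (Fin N) := ⟨⟨0, hN⟩⟩
  haveI : Nontrivial (EuclideanSpace ℝ (Fin N)) :=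
    Module.nontrivial_of_finrank_pos (R := ℝ)
      (by rw [finrank_euclideanSpace_fin]; exact hN)
  obtain ⟨u, hu⟩ := exists_norm_eq (EuclideanSpace ℝ (Fin N)) (zero_le_one)
  have husph : u ∈ sphere (0 : EuclideanSpace ℝ (Fin N)) 1 := by
    rwa [mem_sphere_zero_iff_norm]
  apply le_antisymm
  · by_cases hx0 : x = 0
    · subst hx0
      have : dist (0 : EuclideanSpace ℝ (Fin N)) u = 1 := by
        rw [dist_zero_left, hu]
      simpa [this] using infDist_le_dist_of_mem (x := (0:EuclideanSpace ℝ (Fin N))) husph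
    · have hxn : 0 < ‖x‖ := norm_pos_iff.mpr hx0
      set y := ‖x‖⁻¹ • x with hydef
      have hysph : y ∈ sphere (0 : EuclideanSpace ℝ (Fin N)) 1 := by
        rw [mem_sphere_zero_iff_norm, hydef, norm_smul, norm_inv, norm_norm,
          inv_mul_cancel₀ hxn.ne']
      have hdxy : dist x y = 1 - ‖x‖ := by
        rw [dist_eq_norm, hydef]
        rw [show x - ‖x‖⁻¹ • x = (1 - ‖x‖⁻¹) • x by rw [sub_smul, one_smul]]
        rw [norm_smul, Real.norm_eq_abs]
        rw [abs_of_nonpos (by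
          have : 1 ≤ ‖x‖⁻¹ := (one_le_inv₀ hxn).mpr hx
          linarith)]
        field_simp; ring
      calc infDist x (sphere (0 : EuclideanSpace ℝ (Fin N)) 1) ≤ dist x y :=
            infDist_le_dist_of_mem hysph
        _ = 1 - ‖x‖ := hdxy
  · rw [infDist_eq_iInf]
    haveI : Nonempty (sphere (0 : EuclideanSpace ℝ (Fin N)) 1) := ⟨⟨u, husph⟩⟩
    refine le_ciInf fun y => ?_
    have hyn : ‖(y : EuclideanSpace ℝ (Fin N))‖ = 1 := mem_sphere_zero_iff_norm.mp y.2
    calc 1 - ‖x‖ = ‖(y : EuclideanSpace ℝ (Fin N))‖ - ‖x‖ := by rw [hyn]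
      _ ≤ ‖(y : EuclideanSpace ℝ (Fin N)) - x‖ := by
          have := norm_sub_norm_le (y : EuclideanSpace ℝ (Fin N)) x
          linarith
      _ = dist x (y : EuclideanSpace ℝ (Fin N)) := by rw [dist_eq_norm, norm_sub_rev]

lemma distBdry_ball {N : ℕ} (hN : 0 < N) (x : EuclideanSpace ℝ (Fin N)) (hx : ‖x‖ ≤ 1) :
    distBdry (Metric.ball (0 : EuclideanSpace ℝ (Fin N)) 1) x = 1 - ‖x‖ := by
  haveI : Nonempty (Fin N) := ⟨⟨0, hN⟩⟩
  haveI : Nontrivial (EuclideanSpace ℝ (Fin N)) :=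
    Module.nontrivial_of_finrank_pos (R := ℝ)
      (by rw [finrank_euclideanSpace_fin]; exact hN)
  rw [distBdry, frontier_ball _ one_ne_zero]
  exact infDist_sphere_one hN x hx

lemma inradius_ball_one {N : ℕ} (hN : 0 < N) :
    inradius (Metric.ball (0 : EuclideanSpace ℝ (Fin N)) 1) = 1 := by
  have h0 : distBdry (Metric.ball (0 : EuclideanSpace ℝ (Fin N)) 1) 0 = 1 := by
    rw [distBdry_ball hN 0 (by simp)]; simp
  rw [inradius_eq_of_max (Metric.mem_ball_self one_pos) ?_, h0]
  intro x hxb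
  rw [mem_ball_zero_iff] at hxb
  rw [distBdry_ball hN x hxb.le, h0]
  have := norm_nonneg x
  linarith

lemma integral_ball_case {N : ℕ} (hN : 0 < N) {β : ℝ} (hβ : 0 < β) :
    ∫ x in Metric.ball (0 : EuclideanSpace ℝ (Fin N)) 1,
        distBdry (Metric.ball (0 : EuclideanSpace ℝ (Fin N)) 1) x ^ β
      = (volume (Metric.ball (0 : EuclideanSpace ℝ (Fin N)) 1)).toReal *
        (Gamma (N+1) * Gamma (β+1) / Gamma (N+β+1)) := by
  haveI : Nonempty (Fin N) := ⟨⟨0, hN⟩⟩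
  haveI : Nontrivial (EuclideanSpace ℝ (Fin N)) :=
    Module.nontrivial_of_finrank_pos (R := ℝ)
      (by rw [finrank_euclideanSpace_fin]; exact hN)
  set E := EuclideanSpace ℝ (Fin N)
  set f : ℝ → ℝ := fun y => (max (1 - y) 0) ^ β with hfdef
  have hstep1 : ∫ x in Metric.ball (0:E) 1, distBdry (Metric.ball (0:E) 1) x ^ β
      = ∫ x in Metric.ball (0:E) 1, f ‖x‖ := by
    apply MeasureTheory.setIntegral_congr_fun measurableSet_ball
    intro x hxb
    rw [mem_ball_zero_iff] at hxb
    show distBdry (Metric.ball (0:E) 1) x ^ β = f ‖x‖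
    rw [distBdry_ball hN x hxb.le]
    show (1 - ‖x‖) ^ β = (max (1 - ‖x‖) 0) ^ β
    rw [max_eq_left (by linarith)]
  have hstep2 : ∫ x in Metric.ball (0:E) 1, f ‖x‖ = ∫ x : E, f ‖x‖ := by
    rw [← MeasureTheory.integral_indicator measurableSet_ball]
    apply MeasureTheory.integral_congr_ae
    apply Filter.Eventually.of_forall
    intro x
    classical
    rw [Set.indicator_apply]
    by_cases hxb : x ∈ Metric.ball (0:E) 1
    · simp [hxb]
    · simp only [hxb, if_false]
      rw [mem_ball_zero_iff, not_lt] at hxb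
      show (0:ℝ) = (max (1 - ‖x‖) 0) ^ β
      rw [max_eq_right (by linarith), Real.zero_rpow hβ.ne']
  have hstep3 : ∫ x : E, f ‖x‖
      = N • (volume (Metric.ball (0:E) 1)).toReal •
        ∫ y in Set.Ioi (0:ℝ), y ^ (N - 1) • f y := by
    have := MeasureTheory.integral_fun_norm_addHaar (volume : Measure E) f
    rwa [finrank_euclideanSpace_fin] at this
  have hstep4 : ∫ y in Set.Ioi (0:ℝ), y ^ (N - 1) • f y
      = Gamma N * Gamma (β+1) / Gamma (N+β+1) := by
    have h41 : ∫ y in Set.Ioi (0:ℝ), y ^ (N - 1) • f y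
        = ∫ y in Set.Ioi (0:ℝ), (Set.Ioo (0:ℝ) 1).indicator (fun y => y ^ (N-1) * f y) y := by
      apply MeasureTheory.setIntegral_congr_fun measurableSet_Ioi
      intro y hy
      classical
      show y ^ (N - 1) • f y = _
      rw [Set.indicator_apply]
      by_cases hy1 : y < 1
      · rw [if_pos (Set.mem_Ioo.mpr ⟨hy, hy1⟩), smul_eq_mul]
      · rw [if_neg (fun h => hy1 h.2), smul_eq_mul]
        show y ^ (N - 1) * (max (1 - y) 0) ^ β = 0
        rw [max_eq_right (by push_neg at hy1; linarith), Real.zero_rpow hβ.ne', mul_zero]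
    rw [h41, MeasureTheory.integral_indicator measurableSet_Ioo,
      MeasureTheory.Measure.restrict_restrict measurableSet_Ioo,
      Set.inter_eq_self_of_subset_left Set.Ioo_subset_Ioi_self]
    have h42 : ∫ y in Set.Ioo (0:ℝ) 1, y ^ (N-1) * f y
        = ∫ y in Set.Ioo (0:ℝ) 1, y ^ (N-1) * (1-y) ^ β := by
      apply MeasureTheory.setIntegral_congr_fun measurableSet_Ioo
      intro y hy
      show y ^ (N - 1) * (max (1 - y) 0) ^ β = y ^ (N-1) * (1-y) ^ β
      rw [max_eq_left (by linarith [hy.2])]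
    rw [h42, ← MeasureTheory.integral_Ioc_eq_integral_Ioo,
      ← intervalIntegral.integral_of_le zero_le_one]
    have h43 := beta_nat2 hN (b := β + 1) (by positivity)
    rw [show (β:ℝ) + 1 - 1 = β by ring] at h43
    rw [h43]
    rw [show (N:ℝ) + (β+1) = N + β + 1 by ring]
  rw [hstep1, hstep2, hstep3, hstep4, nsmul_eq_mul, smul_eq_mul]
  have hGN : Gamma ((N:ℝ)+1) = N * Gamma N := by
    rw [Real.Gamma_add_one (by exact_mod_cast hN.ne')]
  rw [hGN]
  ring
end BallCase

theorem stmt_14 (N : ℕ) (Ω : Set (EuclideanSpace ℝ (Fin N)))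
    (hconv : Convex ℝ Ω) (hopen : IsOpen Ω) (hbdd : Bornology.IsBounded Ω)
    (hne : Ω.Nonempty) (β : ℝ) (hβ : 0 < β) :
    (Gamma (N + β + 1) / (Gamma (β + 1) * Gamma (N + 1)))⁻¹ * inradius Ω ^ β ≤
      (volume Ω).toReal⁻¹ * ∫ x in Ω, distBdry Ω x ^ β ∧
    (Ω = Metric.ball (0 : EuclideanSpace ℝ (Fin N)) 1 →
      (volume Ω).toReal⁻¹ * (∫ x in Ω, distBdry Ω x ^ β) =
        (Gamma (N + β + 1) / (Gamma (β + 1) * Gamma (N + 1)))⁻¹ * inradius Ω ^ β) := by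
  rcases Nat.eq_zero_or_pos N with hN0 | hN
  · subst hN0
    haveI : Subsingleton (EuclideanSpace ℝ (Fin 0)) :=
      ⟨fun a b => by ext i; exact Fin.elim0 i⟩
    have hU : Ω = Set.univ := by
      obtain ⟨x, hx⟩ := hne
      exact Set.eq_univ_iff_forall.mpr fun y => by rwa [Subsingleton.elim y x]
    have hfront : frontier Ω = ∅ := by rw [hU, frontier_univ]
    have hdzero : ∀ x, distBdry Ω x = 0 := fun x => by
      rw [distBdry, hfront, Metric.infDist_empty]
    have hinr : inradius Ω = 0 := by
      have hz : ∀ x, (⨆ _ : x ∈ Ω, distBdry Ω x) = 0 := by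
        intro x
        by_cases hx : x ∈ Ω
        · haveI : Nonempty (x ∈ Ω) := ⟨hx⟩
          rw [ciSup_const, hdzero]
        · haveI : IsEmpty (x ∈ Ω) := ⟨hx⟩
          exact Real.iSup_of_isEmpty _
      rw [inradius]
      simp only [hz]
      exact ciSup_const
    have hint0 : ∫ x in Ω, distBdry Ω x ^ β = 0 := by
      have hb : ∀ x : EuclideanSpace ℝ (Fin 0), distBdry Ω x ^ β = 0 := fun x => by
        rw [hdzero, Real.zero_rpow hβ.ne']
      simp [hb]
    rw [hint0, hinr, Real.zero_rpow hβ.ne']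
    constructor
    · simp
    · intro _; simp
  · have key := main_ineq hN hconv hopen hbdd hne hβ
    have hvolT : volume Ω ≠ ⊤ := hbdd.measure_lt_top.ne
    have hV : 0 < (volume Ω).toReal :=
      ENNReal.toReal_pos (hopen.measure_pos volume hne).ne' hvolT
    have hswap : Gamma (β+(N:ℝ)+1) = Gamma ((N:ℝ)+β+1) := by
      rw [show β+(N:ℝ)+1 = (N:ℝ)+β+1 by ring]
    have hcinv : (Gamma ((N:ℝ) + β + 1) / (Gamma (β + 1) * Gamma ((N:ℝ) + 1)))⁻¹
        = Gamma (β+1) * Gamma ((N:ℝ)+1) / Gamma ((N:ℝ)+β+1) := by rw [inv_div]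
    constructor
    · rw [hcinv, inv_mul_eq_div, le_div_iff₀ hV]
      calc Gamma (β+1) * Gamma ((N:ℝ)+1) / Gamma ((N:ℝ)+β+1) * inradius Ω ^ β
            * (volume Ω).toReal
          = Gamma (β+1) * Gamma ((N:ℝ)+1) / Gamma (β+(N:ℝ)+1)
            * (inradius Ω ^ β * (volume Ω).toReal) := by rw [hswap]; ring
        _ ≤ _ := key
    · intro hball
      subst hball
      rw [integral_ball_case hN hβ, inradius_ball_one hN, hcinv, Real.one_rpow, mul_one]
      rw [← mul_assoc, inv_mul_cancel₀ hV.ne', one_mul]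
      ring
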